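/- Let p ≥ 1, n ≥ 1, R_x > 0, R_θ > 0. Let X be a real p×n matrix with columns x_1,…,x_n satisfying ‖x_j‖ ≤ R_x, and let Y = (y_1,…,y_n)ᵀ with |y_j| ≤ R_x·R_θ. Let X' and Y' be obtained from X and Y by replacing the single column/entry (x_i, y_i) with (x'_i, y'_i), where ‖x'_i‖ ≤ R_x and |y'_i| ≤ R_x·R_θ. Assume both XXᵀ and X'(X')ᵀ are invertible, and let θ̂(X) = (XXᵀ)⁻¹XY and θ̂(X') = (X'(X')ᵀ)⁻¹X'Y' be the OLS estimators. Then ‖θ̂(X) − θ̂(X')‖ ≤ 2R_x²·‖(X'(X')ᵀ)⁻¹‖_op·(‖θ̂(X)‖ + R_θ), and consequently, with Π_{R_θ}(v) = (R_θ/max(‖v‖, R_θ))·v, ‖Π_{R_θ}(θ̂(X)) − Π_{R_θ}(θ̂(X'))‖ ≤ 8 R_x² R_θ · ‖(X'(X')ᵀ)⁻¹‖_op, where ‖·‖_op is the operator norm on p×p matrices. -/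

import Mathlib

open MeasureTheory ProbabilityTheory Matrix
open scoped Classical NNReal ENNReal RealInnerProductSpace

noncomputable section

namespace EPTR

variable {Z : Type*}

/-- Hamming distance between two datasets of size `n`. -/
def hDist {n : ℕ} (X X' : Fin n → Z) : ℕ :=
  (Finset.univ.filter fun i => X i ≠ X' i).card

/-- Two datasets are neighbors if they differ in exactly one coordinate. -/
def Neighbor {n : ℕ} (X X' : Fin n → Z) : Prop := hDist X X' = 1

/-- Gaussian measure on Euclidean space with mean `m` and covariance `v • I`
(the product of one-dimensional Gaussians of variance `v`). -/
def gaussianE {ι : Type*} [Fintype ι] (m : EuclideanSpace ℝ ι) (v : ℝ≥0) :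
    Measure (EuclideanSpace ℝ ι) :=
  (Measure.pi fun i => gaussianReal (m i) v).map (MeasurableEquiv.toLp 2 (ι → ℝ))

/-- The threshold shift `M = 1 + (2/ε) log (max (1/δ) (1/ε))` of the ePTR mechanism. -/
def Mshift (ε δ : ℝ) : ℝ := 1 + 2 / ε * Real.log (max (1 / δ) (1 / ε))

/-- The release probability of the ePTR mechanism at sub-distance value `g`. -/
def relProb (ε δ g : ℝ) : ℝ :=
  Real.exp (ε * (g - Mshift ε δ) / 2) / (Real.exp (ε * (g - Mshift ε δ) / 2) + 1)

/-- The standard deviation `s = (2α/ε)√(2 log(1.25/δ))` of the ePTR Gaussian noise. -/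
def noiseSD (ε δ α : ℝ) : ℝ := 2 * α / ε * Real.sqrt (2 * Real.log (1.25 / δ))

/-- Output distribution of the ePTR mechanism on input dataset `X`
(Euclidean-space valued version). -/
def ePTR {n : ℕ} {ι : Type*} [Fintype ι] (ε δ α : ℝ)
    (θhat : (Fin n → Z) → EuclideanSpace ℝ ι) (γ : (Fin n → Z) → ℝ)
    (πbot : Measure (EuclideanSpace ℝ ι)) (X : Fin n → Z) :
    Measure (EuclideanSpace ℝ ι) :=
  ENNReal.ofReal (relProb ε δ (γ X)) • gaussianE (θhat X) (Real.toNNReal (noiseSD ε δ α ^ 2))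
    + ENNReal.ofReal (1 - relProb ε δ (γ X)) • πbot

/-- Output distribution of the ePTR mechanism on input dataset `X` (real valued version). -/
def ePTR1 {n : ℕ} (ε δ α : ℝ)
    (θhat : (Fin n → Z) → ℝ) (γ : (Fin n → Z) → ℝ)
    (πbot : Measure ℝ) (X : Fin n → Z) : Measure ℝ :=
  ENNReal.ofReal (relProb ε δ (γ X)) • gaussianReal (θhat X) (Real.toNNReal (noiseSD ε δ α ^ 2))
    + ENNReal.ofReal (1 - relProb ε δ (γ X)) • πbot

/-- `(ε, δ)`-differential privacy of a mechanism: for all neighboring datasets `X, X'`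
and all measurable events `B`, `μ_X(B) ≤ e^ε μ_{X'}(B) + δ`. -/
def IsDP {n : ℕ} {Ω : Type*} [MeasurableSpace Ω]
    (mech : (Fin n → Z) → Measure Ω) (ε δ : ℝ) : Prop :=
  ∀ X X' : Fin n → Z, Neighbor X X' → ∀ B : Set Ω, MeasurableSet B →
    mech X B ≤ ENNReal.ofReal (Real.exp ε) * mech X' B + ENNReal.ofReal δ

/-- Projection onto the closed ball of radius `a` in a normed space:
`proj a v = (a / max ‖v‖ a) • v`. -/
def proj {V : Type*} [NormedAddCommGroup V] [Module ℝ V] (a : ℝ) (v : V) : V :=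
  (a / max ‖v‖ a) • v

/-- Identification of `Fin p → ℝ` with Euclidean space. -/
def toE {p : ℕ} : (Fin p → ℝ) → EuclideanSpace ℝ (Fin p) :=
  ⇑(EuclideanSpace.equiv (Fin p) ℝ).symm

/-- ℓ²-operator norm of a square matrix. -/
def opNorm {p : ℕ} (A : Matrix (Fin p) (Fin p) ℝ) : ℝ :=
  ‖Matrix.toEuclideanCLM (𝕜 := ℝ) A‖

/-- Smallest eigenvalue of a (symmetric) matrix, via the Rayleigh quotient. -/
def lambdaMin {p : ℕ} (A : Matrix (Fin p) (Fin p) ℝ) : ℝ :=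
  ⨅ v : Metric.sphere (0 : EuclideanSpace ℝ (Fin p)) 1,
    ⟪Matrix.toEuclideanCLM (𝕜 := ℝ) A v.1, v.1⟫

/-- Index set of data points carrying label `k`. -/
def Ik {n K : ℕ} {E : Type*} (X : Fin n → E × Fin K) (k : Fin K) : Finset (Fin n) :=
  Finset.univ.filter fun j => (X j).2 = k

/-- Class-`k` sample frequency `μ̂_k = |I_k| / n`. -/
def classFreq {n K : ℕ} {E : Type*} (X : Fin n → E × Fin K) (k : Fin K) : ℝ :=
  (Ik X k).card / n

/-- Class-`k` sample mean (equal to `0` if the class is empty). -/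
def classMean {n K p : ℕ} (X : Fin n → EuclideanSpace ℝ (Fin p) × Fin K) (k : Fin K) :
    EuclideanSpace ℝ (Fin p) :=
  ((Ik X k).card : ℝ)⁻¹ • ∑ j ∈ Ik X k, (X j).1

/-- The sub-distance of the ePTR Bayes classifier:
`γ(X) = max(min_k |I_k(X)| - c₀ n - 1, 0)`. -/
def gammaBC {n K : ℕ} {E : Type*} (c0 : ℝ) (X : Fin n → E × Fin K) : ℝ :=
  max (((⨅ k : Fin K, (Ik X k).card : ℕ) : ℝ) - c0 * n - 1) 0

end EPTR


namespace EPTRAux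

open EPTR

lemma norm_toE_mulVec_le {p : ℕ} (A : Matrix (Fin p) (Fin p) ℝ) (v : Fin p → ℝ) :
    ‖toE (A *ᵥ v)‖ ≤ opNorm A * ‖toE v‖ := by
  have h : toE (A *ᵥ v) = Matrix.toEuclideanCLM (𝕜 := ℝ) A (toE v) := rfl
  rw [h]; exact (Matrix.toEuclideanCLM (𝕜 := ℝ) A).le_opNorm _

lemma toE_sub {p : ℕ} (u v : Fin p → ℝ) : toE (u - v) = toE u - toE v := rfl
lemma toE_smul {p : ℕ} (c : ℝ) (v : Fin p → ℝ) : toE (c • v) = c • toE v := rfl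

lemma inner_toE {p : ℕ} (u v : Fin p → ℝ) : ⟪toE u, toE v⟫ = u ⬝ᵥ v := by
  simp [toE, PiLp.inner_apply, dotProduct, mul_comm]

lemma key_sq (A B P a s t : ℝ) (hA : 0 ≤ A) (hB : 0 ≤ B) (ha : 0 < a)
    (hP : P ≤ A * B)
    (hs : (s = 1 ∧ A ≤ a) ∨ (s * A = a ∧ a ≤ A))
    (ht : (t = 1 ∧ B ≤ a) ∨ (t * B = a ∧ a ≤ B))
    (hs1 : s ≤ 1) (ht1 : t ≤ 1) (hs0 : 0 < s) (ht0 : 0 < t) :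
    s^2*A^2 - 2*(s*t)*P + t^2*B^2 ≤ A^2 - 2*P + B^2 := by
  rcases hs with ⟨hs, hAa⟩ | ⟨hs, haA⟩ <;> rcases ht with ⟨ht, hBa⟩ | ⟨ht, haB⟩
  · subst hs; subst ht; ring_nf; rfl
  · subst hs
    nlinarith [mul_nonneg (sub_nonneg.2 hP) (sub_nonneg.2 ht1),
      mul_pos ht0 (lt_of_lt_of_le ha haB), sq_nonneg (B - t*B)]
  · subst ht
    nlinarith [mul_nonneg (sub_nonneg.2 hP) (sub_nonneg.2 hs1), sq_nonneg (A - s*A)]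
  · have hst : s * t ≤ 1 := by nlinarith
    nlinarith [mul_nonneg (sub_nonneg.2 hP) (sub_nonneg.2 hst), sq_nonneg (A - B),
      sq_nonneg (s*A - t*B)]

lemma proj_lipschitz {V : Type*} [NormedAddCommGroup V] [InnerProductSpace ℝ V]
    {a : ℝ} (ha : 0 < a) (u v : V) : ‖proj a u - proj a v‖ ≤ ‖u - v‖ := by
  set s := a / max ‖u‖ a with hs
  set t := a / max ‖v‖ a with ht
  have hmu : 0 < max ‖u‖ a := lt_max_of_lt_right ha
  have hmv : 0 < max ‖v‖ a := lt_max_of_lt_right ha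
  have hs0 : 0 < s := div_pos ha hmu
  have ht0 : 0 < t := div_pos ha hmv
  have hs1 : s ≤ 1 := (div_le_one hmu).2 (le_max_right _ _)
  have ht1 : t ≤ 1 := (div_le_one hmv).2 (le_max_right _ _)
  have hsc : (s = 1 ∧ ‖u‖ ≤ a) ∨ (s * ‖u‖ = a ∧ a ≤ ‖u‖) := by
    rcases max_cases ‖u‖ a with ⟨h1, h2⟩ | ⟨h1, h2⟩
    · right; constructor
      · rw [hs, h1]; exact div_mul_cancel₀ a (ne_of_gt (lt_of_lt_of_le ha h2))
      · exact h2
    · left; exact ⟨by rw [hs, h1]; field_simp, le_of_lt h2⟩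
  have htc : (t = 1 ∧ ‖v‖ ≤ a) ∨ (t * ‖v‖ = a ∧ a ≤ ‖v‖) := by
    rcases max_cases ‖v‖ a with ⟨h1, h2⟩ | ⟨h1, h2⟩
    · right; constructor
      · rw [ht, h1]; exact div_mul_cancel₀ a (ne_of_gt (lt_of_lt_of_le ha h2))
      · exact h2
    · left; exact ⟨by rw [ht, h1]; field_simp, le_of_lt h2⟩
  have hsq : ‖proj a u - proj a v‖^2 ≤ ‖u - v‖^2 := by
    have e1 : ‖proj a u - proj a v‖^2
        = s^2*‖u‖^2 - 2*(s*t)*⟪u, v⟫ + t^2*‖v‖^2 := by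
      rw [proj, proj, ← hs, ← ht, norm_sub_sq_real, inner_smul_left, inner_smul_right,
        norm_smul, norm_smul]
      simp [Real.norm_eq_abs, abs_of_pos hs0, abs_of_pos ht0]
      ring
    have e2 : ‖u - v‖^2 = ‖u‖^2 - 2*⟪u, v⟫ + ‖v‖^2 := norm_sub_sq_real u v
    rw [e1, e2]
    have := key_sq ‖u‖ ‖v‖ ⟪u, v⟫ a s t (norm_nonneg u) (norm_nonneg v) ha
      (real_inner_le_norm u v) hsc htc hs1 ht1 hs0 ht0
    linarith
  nlinarith [norm_nonneg (proj a u - proj a v), norm_nonneg (u - v)]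

lemma norm_proj_le {V : Type*} [NormedAddCommGroup V] [InnerProductSpace ℝ V]
    {a : ℝ} (ha : 0 < a) (v : V) : ‖proj a v‖ ≤ a := by
  rw [proj, norm_smul, Real.norm_eq_abs, abs_of_pos (div_pos ha (lt_max_of_lt_right ha))]
  rw [div_mul_eq_mul_div, div_le_iff₀ (lt_max_of_lt_right ha)]
  have := le_max_left ‖v‖ a
  nlinarith

lemma proj_of_le {V : Type*} [NormedAddCommGroup V] [InnerProductSpace ℝ V]
    (a : ℝ) (v : V) (h : a ≤ ‖v‖) : proj a v = (a / ‖v‖) • v := by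
  rw [proj, max_eq_left h]

lemma unit_diff {V : Type*} [NormedAddCommGroup V] [InnerProductSpace ℝ V]
    {a : ℝ} (ha : 0 < a) (u v : V) (hu : 0 < ‖u‖) (hv : 0 < ‖v‖) :
    ‖(a / ‖u‖) • u - (a / ‖v‖) • v‖ ≤ 2 * a * ‖u - v‖ / ‖u‖ := by
  have key : (a / ‖u‖) • u - (a / ‖v‖) • v
      = (a / ‖u‖) • (u - v) + ((a / ‖u‖) - (a / ‖v‖)) • v := by
    rw [smul_sub, sub_smul]; abel
  rw [key]
  calc ‖(a / ‖u‖) • (u - v) + ((a / ‖u‖) - (a / ‖v‖)) • v‖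
      ≤ ‖(a / ‖u‖) • (u - v)‖ + ‖((a / ‖u‖) - (a / ‖v‖)) • v‖ := norm_add_le _ _
    _ = (a / ‖u‖) * ‖u - v‖ + |a / ‖u‖ - a / ‖v‖| * ‖v‖ := by
        rw [norm_smul, norm_smul, Real.norm_eq_abs, Real.norm_eq_abs,
          abs_of_pos (div_pos ha hu)]
    _ ≤ 2 * a * ‖u - v‖ / ‖u‖ := by
        have e : |a / ‖u‖ - a / ‖v‖| * ‖v‖ = a * |‖v‖ - ‖u‖| / ‖u‖ := by
          rw [div_sub_div _ _ (ne_of_gt hu) (ne_of_gt hv), abs_div,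
            abs_of_pos (mul_pos hu hv), mul_comm ‖u‖ a, ← mul_sub, abs_mul, abs_of_pos ha]
          field_simp
        rw [e]
        have h2 : |‖v‖ - ‖u‖| ≤ ‖u - v‖ := by
          rw [abs_sub_comm]; exact abs_norm_sub_norm_le u v
        rw [div_mul_eq_mul_div, ← add_div]
        gcongr ?_ / ‖u‖
        nlinarith

lemma proj_bound {V : Type*} [NormedAddCommGroup V] [InnerProductSpace ℝ V]
    {a c : ℝ} (ha : 0 < a) (hc0 : 0 ≤ c) (u v : V)
    (hD : ‖u - v‖ ≤ c * (‖u‖ + a)) :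
    ‖proj a u - proj a v‖ ≤ 4 * a * c := by
  rcases le_or_gt (1/2 : ℝ) c with hcase | hcase
  · calc ‖proj a u - proj a v‖
        ≤ ‖proj a u‖ + ‖proj a v‖ := norm_sub_le _ _
      _ ≤ a + a := add_le_add (norm_proj_le ha _) (norm_proj_le ha _)
      _ ≤ 4 * a * c := by nlinarith
  · rcases le_or_gt ‖u‖ (3 * a) with hsmall | hbig
    · calc ‖proj a u - proj a v‖
          ≤ ‖u - v‖ := proj_lipschitz ha _ _
        _ ≤ c * (‖u‖ + a) := hD
        _ ≤ 4 * a * c := by nlinarith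
    · have hnn : ‖u‖ - ‖v‖ ≤ ‖u - v‖ := norm_sub_norm_le _ _
      have hvbig : a ≤ ‖v‖ := by nlinarith
      have hubig : a ≤ ‖u‖ := by linarith
      have hupos : 0 < ‖u‖ := lt_of_lt_of_le ha hubig
      have hvpos : 0 < ‖v‖ := lt_of_lt_of_le ha hvbig
      rw [proj_of_le a _ hubig, proj_of_le a _ hvbig]
      refine (unit_diff ha _ _ hupos hvpos).trans ?_
      rw [div_le_iff₀ hupos]
      have k1 : 2 * a * ‖u - v‖ ≤ 2 * a * (c * (‖u‖ + a)) :=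
        mul_le_mul_of_nonneg_left hD (by positivity)
      have k2 : c * a ≤ c * ‖u‖ := mul_le_mul_of_nonneg_left hubig hc0
      have k3 : 2 * a * (c * a) ≤ 2 * a * (c * ‖u‖) :=
        mul_le_mul_of_nonneg_left k2 (by positivity)
      nlinarith [k1, k3]

end EPTRAux

/-- Local sensitivity of the OLS estimator: if the data matrices `(X, Y)` and `(X', Y')`
differ only in the `i`-th data point, with feature columns of (Euclidean) norm at most `R_x`
and responses bounded by `R_x R_θ`, and both Gram matrices are invertible, then
`‖θ̂(X) - θ̂(X')‖ ≤ 2R_x² ‖(X'(X')ᵀ)⁻¹‖_op (‖θ̂(X)‖ + R_θ)`, and after projecting onto the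
ball of radius `R_θ`, `‖Π(θ̂(X)) - Π(θ̂(X'))‖ ≤ 8R_x²R_θ ‖(X'(X')ᵀ)⁻¹‖_op`. -/
theorem ols_sensitivity {p n : ℕ} (hp : 1 ≤ p) (hn : 1 ≤ n)
    {Rx Rθ : ℝ} (hRx : 0 < Rx) (hRθ : 0 < Rθ) (i : Fin n)
    (X X' : Matrix (Fin p) (Fin n) ℝ) (Y Y' : Fin n → ℝ)
    (hXcol : ∀ j, ‖EPTR.toE fun r => X r j‖ ≤ Rx)
    (hY : ∀ j, |Y j| ≤ Rx * Rθ)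
    (hX'i : ‖EPTR.toE fun r => X' r i‖ ≤ Rx) (hY'i : |Y' i| ≤ Rx * Rθ)
    (hsame : ∀ j, j ≠ i → (∀ r, X' r j = X r j) ∧ Y' j = Y j)
    (hinv : IsUnit (X * Xᵀ)) (hinv' : IsUnit (X' * X'ᵀ)) :
    ‖EPTR.toE ((X * Xᵀ)⁻¹ *ᵥ (X *ᵥ Y)) - EPTR.toE ((X' * X'ᵀ)⁻¹ *ᵥ (X' *ᵥ Y'))‖
        ≤ 2 * Rx ^ 2 * EPTR.opNorm (X' * X'ᵀ)⁻¹ *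
            (‖EPTR.toE ((X * Xᵀ)⁻¹ *ᵥ (X *ᵥ Y))‖ + Rθ) ∧
      ‖EPTR.proj Rθ (EPTR.toE ((X * Xᵀ)⁻¹ *ᵥ (X *ᵥ Y)))
            - EPTR.proj Rθ (EPTR.toE ((X' * X'ᵀ)⁻¹ *ᵥ (X' *ᵥ Y')))‖
        ≤ 8 * Rx ^ 2 * Rθ * EPTR.opNorm (X' * X'ᵀ)⁻¹ := by
  classical
  set θ : Fin p → ℝ := (X * Xᵀ)⁻¹ *ᵥ (X *ᵥ Y) with hθ
  set θ' : Fin p → ℝ := (X' * X'ᵀ)⁻¹ *ᵥ (X' *ᵥ Y') with hθ'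
  have hdet : IsUnit (X * Xᵀ).det := (Matrix.isUnit_iff_isUnit_det _).1 hinv
  have hdet' : IsUnit (X' * X'ᵀ).det := (Matrix.isUnit_iff_isUnit_det _).1 hinv'
  have hXθ : (X * Xᵀ) *ᵥ θ = X *ᵥ Y := by
    rw [hθ, Matrix.mulVec_mulVec, Matrix.mul_nonsing_inv _ hdet, Matrix.one_mulVec]
  have hback : (X' * X'ᵀ)⁻¹ *ᵥ ((X' * X'ᵀ) *ᵥ θ) = θ := by
    rw [Matrix.mulVec_mulVec, Matrix.nonsing_inv_mul _ hdet', Matrix.one_mulVec]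
  have hgen : ∀ (M : Matrix (Fin p) (Fin n) ℝ) (Z : Fin n → ℝ) (r : Fin p),
      ((M * Mᵀ) *ᵥ θ - M *ᵥ Z) r = ∑ j, M r j * ((fun q => M q j) ⬝ᵥ θ - Z j) := by
    intro M Z r
    simp only [Pi.sub_apply, Matrix.mulVec, Matrix.mul_apply, dotProduct,
      Matrix.transpose_apply, Finset.sum_mul, mul_sub, Finset.mul_sum, Finset.sum_sub_distrib]
    rw [Finset.sum_comm]
    ring_nf
  set ci : ℝ := (fun r => X r i) ⬝ᵥ θ - Y i with hci
  set ci' : ℝ := (fun r => X' r i) ⬝ᵥ θ - Y' i with hci'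
  set w : Fin p → ℝ := ci' • (fun r => X' r i) - ci • (fun r => X r i) with hw
  have hwkey : (X' * X'ᵀ) *ᵥ θ - X' *ᵥ Y' = w := by
    funext r
    rw [hgen X' Y' r]
    have h0 : ∑ j, X r j * ((fun q => X q j) ⬝ᵥ θ - Y j) = 0 := by
      rw [← hgen X Y r, hXθ]; simp
    have hsplit : ∀ (M : Matrix (Fin p) (Fin n) ℝ) (Z : Fin n → ℝ),
        ∑ j, M r j * ((fun q => M q j) ⬝ᵥ θ - Z j)
          = M r i * ((fun q => M q i) ⬝ᵥ θ - Z i)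
            + ∑ j ∈ Finset.univ.erase i, M r j * ((fun q => M q j) ⬝ᵥ θ - Z j) :=
      fun M Z => (Finset.add_sum_erase _ _ (Finset.mem_univ i)).symm
    rw [hsplit X Y] at h0
    rw [hsplit X' Y']
    have hco : ∑ j ∈ Finset.univ.erase i, X' r j * ((fun q => X' q j) ⬝ᵥ θ - Y' j)
        = ∑ j ∈ Finset.univ.erase i, X r j * ((fun q => X q j) ⬝ᵥ θ - Y j) := by
      refine Finset.sum_congr rfl fun j hj => ?_
      obtain ⟨h1, h2⟩ := hsame j (Finset.ne_of_mem_erase hj)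
      have hcol : (fun q => X' q j) = fun q => X q j := funext h1
      rw [h1 r, hcol, h2]
    rw [hco]
    have hwr : w r = ci' * X' r i - ci * X r i := by
      simp [hw, mul_comm]
    rw [hwr, hci, hci']
    linarith [h0]
  have hdiff : θ - θ' = (X' * X'ᵀ)⁻¹ *ᵥ w := by
    rw [← hwkey, Matrix.mulVec_sub, hback, hθ']
  -- norm bounds
  have hcs : ∀ u : Fin p → ℝ, |u ⬝ᵥ θ| ≤ ‖EPTR.toE u‖ * ‖EPTR.toE θ‖ := by
    intro u
    rw [← EPTRAux.inner_toE]
    exact abs_real_inner_le_norm _ _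
  have hcib : |ci| ≤ Rx * ‖EPTR.toE θ‖ + Rx * Rθ := by
    have h1 : |ci| ≤ |(fun r => X r i) ⬝ᵥ θ| + |Y i| := abs_sub _ _
    have h2 := hcs (fun r => X r i)
    have h3 := mul_le_mul_of_nonneg_right (hXcol i) (norm_nonneg (EPTR.toE θ))
    linarith [hY i]
  have hcib' : |ci'| ≤ Rx * ‖EPTR.toE θ‖ + Rx * Rθ := by
    have h1 : |ci'| ≤ |(fun r => X' r i) ⬝ᵥ θ| + |Y' i| := abs_sub _ _
    have h2 := hcs (fun r => X' r i)
    have h3 := mul_le_mul_of_nonneg_right hX'i (norm_nonneg (EPTR.toE θ))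
    linarith [hY'i]
  have hwb : ‖EPTR.toE w‖ ≤ 2 * Rx ^ 2 * (‖EPTR.toE θ‖ + Rθ) := by
    have h1 : ‖EPTR.toE w‖
        ≤ ‖EPTR.toE (ci' • fun r => X' r i)‖ + ‖EPTR.toE (ci • fun r => X r i)‖ := by
      rw [hw, EPTRAux.toE_sub]; exact norm_sub_le _ _
    rw [EPTRAux.toE_smul, EPTRAux.toE_smul, norm_smul, norm_smul,
      Real.norm_eq_abs, Real.norm_eq_abs] at h1
    have h2 : |ci'| * ‖EPTR.toE fun r => X' r i‖ ≤ (Rx * ‖EPTR.toE θ‖ + Rx * Rθ) * Rx := by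
      have := abs_nonneg ci'
      have h4 : (0:ℝ) ≤ Rx * ‖EPTR.toE θ‖ + Rx * Rθ :=
        add_nonneg (mul_nonneg hRx.le (norm_nonneg _)) (mul_nonneg hRx.le hRθ.le)
      exact mul_le_mul hcib' hX'i (norm_nonneg _) h4
    have h3 : |ci| * ‖EPTR.toE fun r => X r i‖ ≤ (Rx * ‖EPTR.toE θ‖ + Rx * Rθ) * Rx := by
      have h4 : (0:ℝ) ≤ Rx * ‖EPTR.toE θ‖ + Rx * Rθ :=
        add_nonneg (mul_nonneg hRx.le (norm_nonneg _)) (mul_nonneg hRx.le hRθ.le)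
      exact mul_le_mul hcib (hXcol i) (norm_nonneg _) h4
    nlinarith
  have hop : 0 ≤ EPTR.opNorm (X' * X'ᵀ)⁻¹ := norm_nonneg _
  have part1 : ‖EPTR.toE θ - EPTR.toE θ'‖
      ≤ 2 * Rx ^ 2 * EPTR.opNorm (X' * X'ᵀ)⁻¹ * (‖EPTR.toE θ‖ + Rθ) := by
    have he : EPTR.toE θ - EPTR.toE θ' = EPTR.toE ((X' * X'ᵀ)⁻¹ *ᵥ w) := by
      rw [← EPTRAux.toE_sub, hdiff]
    rw [he]
    refine (EPTRAux.norm_toE_mulVec_le _ _).trans ?_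
    nlinarith [mul_le_mul_of_nonneg_left hwb hop]
  refine ⟨part1, ?_⟩
  have hc0 : 0 ≤ 2 * Rx ^ 2 * EPTR.opNorm (X' * X'ᵀ)⁻¹ := by positivity
  have h := EPTRAux.proj_bound hRθ hc0 (EPTR.toE θ) (EPTR.toE θ') part1
  refine h.trans (le_of_eq ?_)
  ring
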